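/- Let q = 2, let Γ ∈ F_{2^m}[z] be a square-free polynomial of degree r with Γ(x_i) ≠ 0 for all i, and let y := (1/Γ(x_1),…,1/Γ(x_n)). Assume the canonical family A built from x and y is a basis of the F_{2^m}-linear span of the dual Goppa code Goppa(x,Γ)^⊥ inside F_{2^m}^n. Then every symmetric rm×rm matrix over F_{2^m} with zero diagonal which is block-diagonal with m diagonal blocks of size r×r (i.e., whose entry in position ((j,i),(j',i')) is zero whenever j ≠ j', rows and columns being indexed by the pairs ordering A) belongs to the matrix code of relations C_mat(A). -/

import Mathlib

open Matrix

/-- Componentwise (Schur) product of two vectors. -/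
def schur {F : Type*} [Field F] {n : ℕ} (a b : Fin n → F) : Fin n → F :=
  fun t => a t * b t

/-- The matrix code of quadratic relations associated with the ordered family `v`. -/
def Cmat {F : Type*} [Field F] {n : ℕ} {ι : Type*} [Fintype ι] [LinearOrder ι]
    (v : ι → Fin n → F) : Set (Matrix ι ι F) :=
  { M | ∃ c : ι → ι → F,
      (∑ i : ι, ∑ j : ι, (if i ≤ j then c i j • schur (v i) (v j) else 0)) = 0 ∧
      (∀ i j : ι, i < j → M i j = c i j ∧ M j i = c i j) ∧
      (∀ i : ι, M i i = 2 * c i i) }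

/-- Linear order on the index pairs `(j,i)` of the canonical family. -/
noncomputable instance pairLO (m r : ℕ) : LinearOrder (Fin m × Fin r) :=
  LinearOrder.lift' (fun p => finProdFinEquiv p) finProdFinEquiv.injective

/-- The generalized Reed–Solomon code `GRS_k(x,y)` (as a subset of `F^n`). -/
def GRSset {F : Type*} [Field F] {n : ℕ} (k : ℕ) (x y : Fin n → F) : Set (Fin n → F) :=
  { w | ∃ P : Polynomial F, P.degree < (k : WithBot ℕ) ∧ w = fun t => y t * P.eval (x t) }

/-- The binary Goppa code `Goppa(x,Γ) = GRS_r(x,y)^⊥ ∩ F_2^n`, with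
`y = (1/Γ(x_1),…,1/Γ(x_n))`, viewed inside `F^n` where `F` has characteristic `2`
(so that the prime subfield `F_2` consists of `0` and `1`). -/
def GoppaSet {F : Type*} [Field F] {n : ℕ} (r : ℕ) (x : Fin n → F) (Γ : Polynomial F) :
    Set (Fin n → F) :=
  { c | (∀ t, c t = 0 ∨ c t = 1) ∧
      ∀ d ∈ GRSset r x (fun t => (Γ.eval (x t))⁻¹), ∑ t, c t * d t = 0 }

/-- The dual, within `F_2^n`, of the binary Goppa code `Goppa(x,Γ)`. -/
def GoppaDualSet {F : Type*} [Field F] {n : ℕ} (r : ℕ) (x : Fin n → F) (Γ : Polynomial F) :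
    Set (Fin n → F) :=
  { d | (∀ t, d t = 0 ∨ d t = 1) ∧ ∀ c ∈ GoppaSet r x Γ, ∑ t, c t * d t = 0 }

open Polynomial in
lemma char_two_of_card {F : Type*} [Field F] [Fintype F] {m : ℕ}
    (hF : Fintype.card F = 2 ^ m) : CharP F 2 := by
  have h := ringChar.charP F
  obtain ⟨n, hp, hcard⟩ := FiniteField.card F (ringChar F)
  have h2 : ringChar F = 2 := by
    have hd : ringChar F ∣ 2 ^ m := by
      rw [← hF, hcard]
      exact dvd_pow_self _ n.pos.ne'
    exact (Nat.prime_dvd_prime_iff_eq hp Nat.prime_two).mp (hp.dvd_of_dvd_pow hd)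
  exact h2 ▸ h

open Polynomial in
lemma exists_sqrt_decomp {F : Type*} [Field F] [Fintype F] [CharP F 2]
    {r : ℕ} (hr : 0 < r) (Γ : Polynomial F) (hsf : Squarefree Γ) (hdeg : Γ.natDegree = r)
    (s : ℕ) (hs : s ≤ 2 * r - 2) :
    ∃ f h : Polynomial F, f.natDegree < r ∧ h.natDegree < r ∧ f * Γ + h ^ 2 = X ^ s := by
  haveI : Fact (Nat.Prime 2) := ⟨Nat.prime_two⟩
  have hΓ0 : Γ ≠ 0 := hsf.ne_zero
  haveI : Nontrivial (AdjoinRoot Γ) :=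
    Ideal.Quotient.nontrivial_iff.mpr (by
      rw [Ne, Ideal.span_singleton_eq_top]
      exact not_isUnit_of_natDegree_pos Γ (hdeg ▸ hr))
  haveI : Module.Finite F (AdjoinRoot Γ) :=
    Module.Finite.of_basis (AdjoinRoot.powerBasis hΓ0).basis
  haveI : Finite (AdjoinRoot Γ) := Module.finite_of_finite F
  haveI : CharP (AdjoinRoot Γ) 2 :=
    charP_of_injective_ringHom (algebraMap F (AdjoinRoot Γ)).injective 2
  have hinj : Function.Injective (fun z : AdjoinRoot Γ => z ^ 2) := by
    intro a b hab
    simp only at hab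
    obtain ⟨T, hT⟩ : ∃ T, AdjoinRoot.mk Γ T = a - b := AdjoinRoot.mk_surjective _
    have h0 : AdjoinRoot.mk Γ (T ^ 2) = 0 := by
      rw [map_pow, hT, sub_pow_char, hab, sub_self]
    have hdvd : Γ ∣ T := hsf.isRadical 2 T (AdjoinRoot.mk_eq_zero.mp h0)
    have : a - b = 0 := by rw [← hT, AdjoinRoot.mk_eq_zero]; exact hdvd
    exact sub_eq_zero.mp this
  obtain ⟨ζ, hζ⟩ := (Finite.injective_iff_surjective.mp hinj) (AdjoinRoot.mk Γ (X ^ s))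
  obtain ⟨H, rfl⟩ : ∃ H, AdjoinRoot.mk Γ H = ζ := AdjoinRoot.mk_surjective _
  simp only at hζ
  have hdvd : Γ ∣ H ^ 2 - X ^ s := by
    rw [← AdjoinRoot.mk_eq_zero, map_sub, map_pow, hζ, sub_self]
  set Γm := Γ * C Γ.leadingCoeff⁻¹ with hΓm
  have hmon : Γm.Monic := monic_mul_leadingCoeff_inv hΓ0
  have hΓdegm : Γm.degree = Γ.degree := degree_mul_leadingCoeff_inv Γ hΓ0
  set h := H %ₘ Γm with hh
  have hΓdvdm : Γ ∣ Γm := ⟨C Γ.leadingCoeff⁻¹, rfl⟩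
  have hdh : Γ ∣ H - h := by
    rw [hh, modByMonic_eq_sub_mul_div H Γm]
    exact dvd_trans hΓdvdm ⟨H /ₘ Γm, by ring⟩
  have hdegh : h.degree < (r : WithBot ℕ) := by
    have := degree_modByMonic_lt H hmon
    rwa [hΓdegm, degree_eq_natDegree hΓ0, hdeg] at this
  have hnh : h.natDegree < r := by
    rcases eq_or_ne h 0 with h0 | h0
    · simpa [h0] using hr
    · exact (natDegree_lt_iff_degree_lt h0).mpr hdegh
  have hdvd2 : Γ ∣ X ^ s - h ^ 2 := by
    have h1 : Γ ∣ H ^ 2 - h ^ 2 := by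
      have e : H ^ 2 - h ^ 2 = (H + h) * (H - h) := by ring
      rw [e]; exact Dvd.dvd.mul_left hdh _
    have h2 := dvd_sub h1 hdvd
    have e2 : H ^ 2 - h ^ 2 - (H ^ 2 - X ^ s) = X ^ s - h ^ 2 := by ring
    rwa [e2] at h2
  obtain ⟨f, hf⟩ := hdvd2
  refine ⟨f, h, ?_, hnh, by rw [mul_comm] at hf; linear_combination -hf⟩
  rcases eq_or_ne f 0 with hf0 | hf0
  · simpa [hf0] using hr
  have hdegmul : (Γ * f).natDegree = r + f.natDegree := by
    rw [natDegree_mul hΓ0 hf0, hdeg]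
  have hble : (X ^ s - h ^ 2 : Polynomial F).natDegree ≤ 2 * r - 2 := by
    refine le_trans (natDegree_sub_le _ _) ?_
    simp only [natDegree_X_pow, natDegree_pow, natDegree_X, mul_one]
    omega
  rw [hf, hdegmul] at hble
  omega


/-- Generic assembly lemma: a symmetric zero-diagonal matrix whose nonzero-entry Schur
products lie in the span, for a family whose diagonal Schur products are a permutation
of the family, belongs to the matrix code of relations. -/
lemma mem_cmat_of_rel {F : Type*} [Field F] {n : ℕ} {ι : Type*} [Fintype ι] [LinearOrder ι]
    (v : ι → Fin n → F) (M : Matrix ι ι F) (h2 : (2 : F) = 0)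
    (E : ι ≃ ι) (hdiagA : ∀ p, schur (v p) (v p) = v (E p))
    (hsym : ∀ p p', M p p' = M p' p) (hdiag : ∀ p, M p p = 0)
    (hmem : ∀ p p', M p p' ≠ 0 → schur (v p) (v p') ∈ Submodule.span F (Set.range v)) :
    M ∈ Cmat v := by
  have hSoff : (∑ p : ι, ∑ p' : ι, if p < p' then M p p' • schur (v p) (v p') else 0)
      ∈ Submodule.span F (Set.range v) := by
    refine Submodule.sum_mem _ fun p _ => Submodule.sum_mem _ fun p' _ => ?_
    by_cases hlt : p < p'
    · rw [if_pos hlt]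
      by_cases h0 : M p p' = 0
      · rw [h0, zero_smul]; exact Submodule.zero_mem _
      · exact Submodule.smul_mem _ _ (hmem p p' h0)
    · rw [if_neg hlt]; exact Submodule.zero_mem _
  obtain ⟨d, hd⟩ := (Submodule.mem_span_range_iff_exists_fun F).mp hSoff
  refine ⟨fun p p' => if p = p' then d (E p) else M p p', ?_, ?_, ?_⟩
  · have hsplit : ∀ p p' : ι,
        (if p ≤ p' then (if p = p' then d (E p) else M p p') • schur (v p) (v p') else 0)
          = (if p < p' then M p p' • schur (v p) (v p') else 0)
            + (if p = p' then d (E p) • schur (v p) (v p') else 0) := by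
      intro p p'
      rcases eq_or_ne p p' with rfl | hne
      · simp
      · by_cases hlt : p < p'
        · simp [hne, hlt, hlt.le]
        · have hnle : ¬p ≤ p' := fun hle => hlt (lt_of_le_of_ne hle hne)
          simp [hne, hlt, hnle]
    have e1 : (∑ p : ι, ∑ p' : ι,
        if p ≤ p' then (if p = p' then d (E p) else M p p') • schur (v p) (v p') else 0)
        = (∑ p : ι, ∑ p' : ι, if p < p' then M p p' • schur (v p) (v p') else 0)
          + ∑ p : ι, d (E p) • schur (v p) (v p) := by
      rw [← Finset.sum_add_distrib]
      refine Finset.sum_congr rfl fun p _ => ?_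
      have hsingle : d (E p) • schur (v p) (v p)
          = ∑ p' : ι, if p = p' then d (E p) • schur (v p) (v p') else 0 := by
        rw [Finset.sum_ite_eq]
        simp
      rw [hsingle, ← Finset.sum_add_distrib]
      exact Finset.sum_congr rfl fun p' _ => hsplit p p'
    have e2 : (∑ p : ι, d (E p) • schur (v p) (v p))
        = ∑ p : ι, ∑ p' : ι, if p < p' then M p p' • schur (v p) (v p') else 0 := by
      simp only [hdiagA]
      rw [Equiv.sum_comp E (fun q => d q • v q)]
      exact hd
    show (∑ p : ι, ∑ p' : ι,
        if p ≤ p' then (if p = p' then d (E p) else M p p') • schur (v p) (v p') else 0) = 0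
    rw [e1, e2, ← two_smul F, h2, zero_smul]
  · intro p p' hlt
    constructor
    · show M p p' = if p = p' then d (E p) else M p p'
      rw [if_neg (ne_of_lt hlt)]
    · show M p' p = if p = p' then d (E p) else M p p'
      rw [if_neg (ne_of_lt hlt)]
      exact hsym p' p
  · intro p
    show M p p = 2 * if p = p then d (E p) else M p p
    rw [if_pos rfl, hdiag p, h2, zero_mul]


/-- Let `q = 2`, `F = F_{2^m}`, `Γ` a square-free polynomial of degree
`r` with `Γ(x_i) ≠ 0` for all `i`, `y = (1/Γ(x_1),…,1/Γ(x_n))`, and assume the canonical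
family `A` built from `x` and `y` is a basis of the `F_{2^m}`-linear span of
`Goppa(x,Γ)^⊥` inside `F_{2^m}^n`. Then every symmetric `rm×rm` matrix with zero
diagonal which is block-diagonal with `m` diagonal blocks of size `r×r` (i.e. whose
entry at `((j,i),(j',i'))` vanishes whenever `j ≠ j'`) belongs to `C_mat(A)`. -/
theorem cmat_goppa_block_diagonal
    (m r nn : ℕ) (hm : 0 < m) (hr : 0 < r) (hn : 0 < nn)
    (F : Type*) [Field F] [Fintype F] (hF : Fintype.card F = 2 ^ m)
    (x : Fin nn → F) (hx : Function.Injective x)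
    (Γ : Polynomial F) (hsf : Squarefree Γ) (hdeg : Γ.natDegree = r)
    (hΓ : ∀ t, Γ.eval (x t) ≠ 0)
    (y : Fin nn → F) (hy : y = fun t => (Γ.eval (x t))⁻¹)
    (A : Fin m × Fin r → Fin nn → F)
    (hA : A = fun p t => (x t ^ (p.2 : ℕ) * y t) ^ 2 ^ (p.1 : ℕ))
    (hAind : LinearIndependent F A)
    (hAspan : Submodule.span F (Set.range A) = Submodule.span F (GoppaDualSet r x Γ)) :
    ∀ M : Matrix (Fin m × Fin r) (Fin m × Fin r) F,
      (∀ p p', M p p' = M p' p) →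
      (∀ p, M p p = 0) →
      (∀ p p', p.1 ≠ p'.1 → M p p' = 0) →
      M ∈ Cmat A := by
  intro M hsym hdiag hblock
  haveI : NeZero m := ⟨hm.ne'⟩
  haveI : CharP F 2 := char_two_of_card hF
  haveI : Fact (Nat.Prime 2) := ⟨Nat.prime_two⟩
  have h2 : (2 : F) = 0 := by exact_mod_cast CharP.cast_eq_zero F 2
  have hAval : ∀ p t, A p t = (x t ^ (p.2 : ℕ) * y t) ^ 2 ^ (p.1 : ℕ) := fun p t => by rw [hA]
  have hyval : ∀ t, y t = (Γ.eval (x t))⁻¹ := fun t => by rw [hy]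
  -- value of Fin successor
  have hval : ∀ j : Fin m, ((j + (1 : Fin m) : Fin m) : ℕ) = ((j : ℕ) + 1) % m := by
    intro j
    rw [Fin.val_add, Fin.val_one']
    conv_rhs => rw [Nat.add_mod, Nat.mod_eq_of_lt j.isLt]
  have hshift : ∀ (z : F) (j : Fin m),
      z ^ 2 ^ ((j + (1 : Fin m) : Fin m) : ℕ) = (z ^ 2 ^ (j : ℕ)) ^ 2 := by
    intro z j
    rw [← pow_mul, ← pow_succ, hval j]
    rcases Nat.lt_or_ge ((j : ℕ) + 1) m with hj | hj
    · rw [Nat.mod_eq_of_lt hj]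
    · have hj' : (j : ℕ) + 1 = m := by have := j.isLt; omega
      rw [hj', Nat.mod_self, pow_zero, pow_one, ← hF]
      exact (FiniteField.pow_card z).symm
  -- expansion of Frobenius powers of `P(x)·y`
  have hfrob : ∀ (e : ℕ) (P : Polynomial F), P.natDegree < r → ∀ t : Fin nn,
      (P.eval (x t) * y t) ^ 2 ^ e
        = ∑ k : Fin r, P.coeff (k : ℕ) ^ 2 ^ e * (x t ^ (k : ℕ) * y t) ^ 2 ^ e := by
    intro e P hP t
    calc (P.eval (x t) * y t) ^ 2 ^ e
        = iterateFrobenius F 2 e (P.eval (x t) * y t) := (iterateFrobenius_def 2 e _).symm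
      _ = iterateFrobenius F 2 e (∑ k ∈ Finset.range r, P.coeff k * (x t ^ k * y t)) := by
          rw [Polynomial.eval_eq_sum_range' hP, Finset.sum_mul]
          congr 1
          exact Finset.sum_congr rfl fun k _ => by ring
      _ = ∑ k ∈ Finset.range r, iterateFrobenius F 2 e (P.coeff k * (x t ^ k * y t)) :=
          map_sum _ _ _
      _ = ∑ k ∈ Finset.range r, P.coeff k ^ 2 ^ e * (x t ^ k * y t) ^ 2 ^ e := by
          refine Finset.sum_congr rfl fun k _ => ?_
          rw [_root_.map_mul, iterateFrobenius_def, iterateFrobenius_def]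
      _ = ∑ k : Fin r, P.coeff (k : ℕ) ^ 2 ^ e * (x t ^ (k : ℕ) * y t) ^ 2 ^ e :=
          (Fin.sum_univ_eq_sum_range _ r).symm
  -- key membership
  have hkeymem : ∀ (j : Fin m) (i i' : Fin r),
      schur (A (j, i)) (A (j, i')) ∈ Submodule.span F (Set.range A) := by
    intro j i i'
    obtain ⟨f, h, hnf, hnh, hfh⟩ := exists_sqrt_decomp hr Γ hsf hdeg ((i : ℕ) + (i' : ℕ))
      (by have := i.isLt; have := i'.isLt; omega)
    have hexp : ∀ z : F, z ^ 2 ^ ((j + (1 : Fin m) : Fin m) : ℕ) = z ^ 2 ^ ((j : ℕ) + 1) :=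
      fun z => (hshift z j).trans (by rw [← pow_mul, ← pow_succ])
    have heq : schur (A (j, i)) (A (j, i')) =
        (∑ k : Fin r, (f.coeff (k : ℕ) ^ 2 ^ (j : ℕ)) • A (j, k))
          + ∑ k : Fin r, (h.coeff (k : ℕ) ^ 2 ^ ((j : ℕ) + 1)) • A (j + 1, k) := by
      funext t
      simp only [schur, Pi.add_apply, Finset.sum_apply, Pi.smul_apply, smul_eq_mul]
      simp only [hAval]
      simp only [hexp]
      have hgb : Γ.eval (x t) * y t = 1 := by rw [hyval]; exact mul_inv_cancel₀ (hΓ t)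
      have heval : f.eval (x t) * Γ.eval (x t) + h.eval (x t) ^ 2
          = x t ^ ((i : ℕ) + (i' : ℕ)) := by
        have h' := congrArg (Polynomial.eval (x t)) hfh
        simpa using h'
      have hbase : x t ^ ((i : ℕ) + (i' : ℕ)) * y t ^ 2
          = f.eval (x t) * y t + (h.eval (x t) * y t) ^ 2 := by
        linear_combination (-(y t ^ 2)) * heval + f.eval (x t) * y t * hgb
      calc (x t ^ (i : ℕ) * y t) ^ 2 ^ (j : ℕ) * (x t ^ (i' : ℕ) * y t) ^ 2 ^ (j : ℕ)
          = (x t ^ ((i : ℕ) + (i' : ℕ)) * y t ^ 2) ^ 2 ^ (j : ℕ) := by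
            rw [← mul_pow]; congr 1; ring
        _ = (f.eval (x t) * y t + (h.eval (x t) * y t) ^ 2) ^ 2 ^ (j : ℕ) := by rw [hbase]
        _ = (f.eval (x t) * y t) ^ 2 ^ (j : ℕ) + ((h.eval (x t) * y t) ^ 2) ^ 2 ^ (j : ℕ) :=
            add_pow_char_pow _ _ 2 _
        _ = (f.eval (x t) * y t) ^ 2 ^ (j : ℕ) + (h.eval (x t) * y t) ^ 2 ^ ((j : ℕ) + 1) := by
            rw [← pow_mul, ← pow_succ']
        _ = _ := by rw [hfrob (j : ℕ) f hnf t, hfrob ((j : ℕ) + 1) h hnh t]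
    rw [heq]
    exact Submodule.add_mem _
      (Submodule.sum_mem _ fun k _ => Submodule.smul_mem _ _ (Submodule.subset_span ⟨(j, k), rfl⟩))
      (Submodule.sum_mem _ fun k _ => Submodule.smul_mem _ _
        (Submodule.subset_span ⟨(j + 1, k), rfl⟩))
  -- the diagonal Schur products are a permutation of the family
  set E : (Fin m × Fin r) ≃ (Fin m × Fin r) :=
    (Equiv.addRight (1 : Fin m)).prodCongr (Equiv.refl (Fin r)) with hEdef
  have hdiagA : ∀ p : Fin m × Fin r, schur (A p) (A p) = A (E p) := by
    rintro ⟨j, i⟩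
    funext t
    show A (j, i) t * A (j, i) t = A (j + 1, i) t
    simp only [hAval]
    rw [hshift (x t ^ (i : ℕ) * y t) j]
    ring
  refine mem_cmat_of_rel A M h2 E hdiagA hsym hdiag ?_
  rintro ⟨j, i⟩ ⟨j', i'⟩ hM0
  have hb : j = j' := by
    by_contra hb
    exact hM0 (hblock (j, i) (j', i') hb)
  subst hb
  exact hkeymem j i i'
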